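/- Let v₁=(1,0,0), v₂=(0,1,0), v₃=(0,0,1), v₄=(0,-1,-1), v₅=(-1,-1,0), v₆=(1,2,1) in ℝ³. Then cone{v₁,v₂,v₄,v₆} ∪ cone{v₁,v₃,v₄,v₅} ∪ cone{v₂,v₃,v₅,v₆} ∪ cone{v₂,v₄,v₅} ∪ cone{v₁,v₃,v₆} = ℝ³. (The fan Σ spanned by the faces of the prism with vertices v₁,…,v₆ is complete.) -/
import Mathlib

def coneGen (S : Set (Fin 3 → ℝ)) : Set (Fin 3 → ℝ) :=
  {x | ∃ (n : ℕ) (c : Fin n → ℝ) (v : Fin n → (Fin 3 → ℝ)),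
      (∀ i, 0 ≤ c i) ∧ (∀ i, v i ∈ S) ∧ x = ∑ i, c i • v i}

def v1 : Fin 3 → ℝ := ![1, 0, 0]
def v2 : Fin 3 → ℝ := ![0, 1, 0]
def v3 : Fin 3 → ℝ := ![0, 0, 1]
def v4 : Fin 3 → ℝ := ![0, -1, -1]
def v5 : Fin 3 → ℝ := ![-1, -1, 0]
def v6 : Fin 3 → ℝ := ![1, 2, 1]

lemma mem3 {S : Set (Fin 3 → ℝ)} {w0 w1 w2 : Fin 3 → ℝ}
    (h0 : w0 ∈ S) (h1 : w1 ∈ S) (h2 : w2 ∈ S) {c0 c1 c2 : ℝ}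
    (hc0 : 0 ≤ c0) (hc1 : 0 ≤ c1) (hc2 : 0 ≤ c2) {x : Fin 3 → ℝ}
    (hx : x = c0 • w0 + c1 • w1 + c2 • w2) : x ∈ coneGen S := by
  refine ⟨3, ![c0, c1, c2], ![w0, w1, w2], ?_, ?_, ?_⟩
  · intro i; fin_cases i <;> simpa
  · intro i; fin_cases i <;> simpa
  · rw [hx]; simp [Fin.sum_univ_three]

theorem stmt3 :
    coneGen {v1, v2, v4, v6} ∪ coneGen {v1, v3, v4, v5} ∪
      coneGen {v2, v3, v5, v6} ∪ coneGen {v2, v4, v5} ∪ coneGen {v1, v3, v6} =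
    Set.univ := by
  ext x
  simp only [Set.mem_union, Set.mem_univ, iff_true]
  rcases le_or_gt 0 ((1:ℝ) * x 0 + (-1:ℝ) * x 1) with h1 | h1
  rcases le_or_gt 0 ((1:ℝ) * x 2) with h2 | h2
  rcases le_or_gt 0 ((1:ℝ) * x 1) with h3 | h3
  rcases le_or_gt 0 ((-1:ℝ) * x 1 + (2:ℝ) * x 2) with h4 | h4
  · right
    exact mem3 (w0 := v1) (w1 := v3) (w2 := v6) (by simp) (by simp) (by simp) (c0 := (1:ℝ) * x 0 + (-1/2:ℝ) * x 1) (c1 := (-1/2:ℝ) * x 1 + (1:ℝ) * x 2) (c2 := (1/2:ℝ) * x 1) (by linarith) (by linarith) (by linarith) (funext fun i => by fin_cases i <;> simp [v1,v3,v6] <;> ring)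
  · left; left; left; left
    exact mem3 (w0 := v1) (w1 := v2) (w2 := v6) (by simp) (by simp) (by simp) (c0 := (1:ℝ) * x 0 + (-1:ℝ) * x 2) (c1 := (1:ℝ) * x 1 + (-2:ℝ) * x 2) (c2 := (1:ℝ) * x 2) (by linarith) (by linarith) (by linarith) (funext fun i => by fin_cases i <;> simp [v1,v2,v6] <;> ring)
  · left; left; left; right
    exact mem3 (w0 := v1) (w1 := v3) (w2 := v5) (by simp) (by simp) (by simp) (c0 := (1:ℝ) * x 0 + (-1:ℝ) * x 1) (c1 := (1:ℝ) * x 2) (c2 := (-1:ℝ) * x 1) (by linarith) (by linarith) (by linarith) (funext fun i => by fin_cases i <;> simp [v1,v3,v5] <;> ring)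
  rcases le_or_gt 0 ((1:ℝ) * x 1) with h5 | h5
  · left; left; left; left
    exact mem3 (w0 := v1) (w1 := v2) (w2 := v4) (by simp) (by simp) (by simp) (c0 := (1:ℝ) * x 0) (c1 := (1:ℝ) * x 1 + (-1:ℝ) * x 2) (c2 := (-1:ℝ) * x 2) (by linarith) (by linarith) (by linarith) (funext fun i => by fin_cases i <;> simp [v1,v2,v4] <;> ring)
  rcases le_or_gt 0 ((1:ℝ) * x 1 + (-1:ℝ) * x 2) with h6 | h6
  rcases le_or_gt 0 ((1:ℝ) * x 0) with h7 | h7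
  · left; left; left; left
    exact mem3 (w0 := v1) (w1 := v2) (w2 := v4) (by simp) (by simp) (by simp) (c0 := (1:ℝ) * x 0) (c1 := (1:ℝ) * x 1 + (-1:ℝ) * x 2) (c2 := (-1:ℝ) * x 2) (by linarith) (by linarith) (by linarith) (funext fun i => by fin_cases i <;> simp [v1,v2,v4] <;> ring)
  · left; right
    exact mem3 (w0 := v2) (w1 := v4) (w2 := v5) (by simp) (by simp) (by simp) (c0 := (-1:ℝ) * x 0 + (1:ℝ) * x 1 + (-1:ℝ) * x 2) (c1 := (-1:ℝ) * x 2) (c2 := (-1:ℝ) * x 0) (by linarith) (by linarith) (by linarith) (funext fun i => by fin_cases i <;> simp [v2,v4,v5] <;> ring)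
  rcases le_or_gt 0 ((1:ℝ) * x 0 + (-1:ℝ) * x 1 + (1:ℝ) * x 2) with h8 | h8
  · left; left; left; right
    exact mem3 (w0 := v1) (w1 := v4) (w2 := v5) (by simp) (by simp) (by simp) (c0 := (1:ℝ) * x 0 + (-1:ℝ) * x 1 + (1:ℝ) * x 2) (c1 := (-1:ℝ) * x 2) (c2 := (-1:ℝ) * x 1 + (1:ℝ) * x 2) (by linarith) (by linarith) (by linarith) (funext fun i => by fin_cases i <;> simp [v1,v4,v5] <;> ring)
  · left; right
    exact mem3 (w0 := v2) (w1 := v4) (w2 := v5) (by simp) (by simp) (by simp) (c0 := (-1:ℝ) * x 0 + (1:ℝ) * x 1 + (-1:ℝ) * x 2) (c1 := (-1:ℝ) * x 2) (c2 := (-1:ℝ) * x 0) (by linarith) (by linarith) (by linarith) (funext fun i => by fin_cases i <;> simp [v2,v4,v5] <;> ring)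
  rcases le_or_gt 0 ((1:ℝ) * x 2) with h9 | h9
  rcases le_or_gt 0 ((1:ℝ) * x 0) with h10 | h10
  rcases le_or_gt 0 ((1:ℝ) * x 0 + (-1:ℝ) * x 1 + (1:ℝ) * x 2) with h11 | h11
  rcases le_or_gt 0 ((2:ℝ) * x 0 + (-1:ℝ) * x 1) with h12 | h12
  rcases le_or_gt 0 ((-1:ℝ) * x 1 + (2:ℝ) * x 2) with h13 | h13
  · right
    exact mem3 (w0 := v1) (w1 := v3) (w2 := v6) (by simp) (by simp) (by simp) (c0 := (1:ℝ) * x 0 + (-1/2:ℝ) * x 1) (c1 := (-1/2:ℝ) * x 1 + (1:ℝ) * x 2) (c2 := (1/2:ℝ) * x 1) (by linarith) (by linarith) (by linarith) (funext fun i => by fin_cases i <;> simp [v1,v3,v6] <;> ring)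
  · left; left; left; left
    exact mem3 (w0 := v1) (w1 := v2) (w2 := v6) (by simp) (by simp) (by simp) (c0 := (1:ℝ) * x 0 + (-1:ℝ) * x 2) (c1 := (1:ℝ) * x 1 + (-2:ℝ) * x 2) (c2 := (1:ℝ) * x 2) (by linarith) (by linarith) (by linarith) (funext fun i => by fin_cases i <;> simp [v1,v2,v6] <;> ring)
  · left; left; right
    exact mem3 (w0 := v2) (w1 := v3) (w2 := v6) (by simp) (by simp) (by simp) (c0 := (-2:ℝ) * x 0 + (1:ℝ) * x 1) (c1 := (-1:ℝ) * x 0 + (1:ℝ) * x 2) (c2 := (1:ℝ) * x 0) (by linarith) (by linarith) (by linarith) (funext fun i => by fin_cases i <;> simp [v2,v3,v6] <;> ring)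
  rcases le_or_gt 0 ((1:ℝ) * x 0 + (-1:ℝ) * x 2) with h14 | h14
  · left; left; left; left
    exact mem3 (w0 := v1) (w1 := v2) (w2 := v6) (by simp) (by simp) (by simp) (c0 := (1:ℝ) * x 0 + (-1:ℝ) * x 2) (c1 := (1:ℝ) * x 1 + (-2:ℝ) * x 2) (c2 := (1:ℝ) * x 2) (by linarith) (by linarith) (by linarith) (funext fun i => by fin_cases i <;> simp [v1,v2,v6] <;> ring)
  · left; left; right
    exact mem3 (w0 := v2) (w1 := v3) (w2 := v6) (by simp) (by simp) (by simp) (c0 := (-2:ℝ) * x 0 + (1:ℝ) * x 1) (c1 := (-1:ℝ) * x 0 + (1:ℝ) * x 2) (c2 := (1:ℝ) * x 0) (by linarith) (by linarith) (by linarith) (funext fun i => by fin_cases i <;> simp [v2,v3,v6] <;> ring)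
  · left; left; right
    exact mem3 (w0 := v2) (w1 := v3) (w2 := v5) (by simp) (by simp) (by simp) (c0 := (-1:ℝ) * x 0 + (1:ℝ) * x 1) (c1 := (1:ℝ) * x 2) (c2 := (-1:ℝ) * x 0) (by linarith) (by linarith) (by linarith) (funext fun i => by fin_cases i <;> simp [v2,v3,v5] <;> ring)
  rcases le_or_gt 0 ((1:ℝ) * x 0) with h15 | h15
  · left; left; left; left
    exact mem3 (w0 := v1) (w1 := v2) (w2 := v4) (by simp) (by simp) (by simp) (c0 := (1:ℝ) * x 0) (c1 := (1:ℝ) * x 1 + (-1:ℝ) * x 2) (c2 := (-1:ℝ) * x 2) (by linarith) (by linarith) (by linarith) (funext fun i => by fin_cases i <;> simp [v1,v2,v4] <;> ring)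
  · left; right
    exact mem3 (w0 := v2) (w1 := v4) (w2 := v5) (by simp) (by simp) (by simp) (c0 := (-1:ℝ) * x 0 + (1:ℝ) * x 1 + (-1:ℝ) * x 2) (c1 := (-1:ℝ) * x 2) (c2 := (-1:ℝ) * x 0) (by linarith) (by linarith) (by linarith) (funext fun i => by fin_cases i <;> simp [v2,v4,v5] <;> ring)
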